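/- Let 𝒜 := {x ∈ ℝⁿ : Ax = b} be nonempty, let r⁰ be a minimum-D-norm point of 𝒜, and let α, α′ ∈ ℝⁿ satisfy Aα = 0 and Aα′ = 0. For β, β′ ∈ ℝ, set K̄ := {x ∈ ℝⁿ : ⟨α, x⟩_D ≥ β, ⟨α′, x⟩_D ≥ β′} and K := 𝒜 ∩ K̄. If K̄ ≠ ∅ and z̄ ∈ K̄ is the point of K̄ at minimum D-distance from r⁰ (i.e., ‖z̄ − r⁰‖_D ≤ ‖x − r⁰‖_D for all x ∈ K̄), then z̄ ∈ 𝒜 (so z̄ ∈ K) and z̄ is a minimum-D-norm point of K. In particular, K ≠ ∅ if and only if K̄ ≠ ∅. -/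

import Mathlib

open Matrix

/-- Claim 2 of the paper: if `zbar` is the point of
`K̄ = {x : ⟨α, x⟩_D ≥ β, ⟨α', x⟩_D ≥ β'}` (with `Aα = Aα' = 0`) at minimum
`D`-distance from `r⁰`, the minimum-`D`-norm point of `𝒜 = {x : Ax = b}`, then
`zbar ∈ 𝒜`, hence `zbar` is a minimum-`D`-norm point of `K = 𝒜 ∩ K̄`; in
particular `K ≠ ∅` iff `K̄ ≠ ∅`. -/
theorem statement9 {m n : ℕ}
    (A : Matrix (Fin m) (Fin n) ℝ) (b : Fin m → ℝ)
    (D : Matrix (Fin n) (Fin n) ℝ) (hD : D.PosDef)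
    (r0 : Fin n → ℝ) (hr0A : A *ᵥ r0 = b)
    (hr0min : ∀ x : Fin n → ℝ, A *ᵥ x = b →
      Real.sqrt (r0 ⬝ᵥ D *ᵥ r0) ≤ Real.sqrt (x ⬝ᵥ D *ᵥ x))
    (α α' : Fin n → ℝ) (hα : A *ᵥ α = 0) (hα' : A *ᵥ α' = 0)
    (β β' : ℝ)
    (Kbar : Set (Fin n → ℝ))
    (hKbar : Kbar = {x | β ≤ α ⬝ᵥ D *ᵥ x ∧ β' ≤ α' ⬝ᵥ D *ᵥ x})
    (zbar : Fin n → ℝ) (hzbar : zbar ∈ Kbar)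
    (hzbarmin : ∀ x ∈ Kbar,
      Real.sqrt ((zbar - r0) ⬝ᵥ D *ᵥ (zbar - r0)) ≤
        Real.sqrt ((x - r0) ⬝ᵥ D *ᵥ (x - r0))) :
    A *ᵥ zbar = b ∧
    (∀ x : Fin n → ℝ, A *ᵥ x = b → x ∈ Kbar →
      Real.sqrt (zbar ⬝ᵥ D *ᵥ zbar) ≤ Real.sqrt (x ⬝ᵥ D *ᵥ x)) ∧
    ({x : Fin n → ℝ | A *ᵥ x = b} ∩ Kbar).Nonempty := by
  -- basic facts about the quadratic form
  have hQnn : ∀ x : Fin n → ℝ, 0 ≤ x ⬝ᵥ D *ᵥ x := by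
    intro x
    have := hD.posSemidef.dotProduct_mulVec_nonneg x
    simpa using this
  have hsymm : ∀ x y : Fin n → ℝ, x ⬝ᵥ D *ᵥ y = y ⬝ᵥ D *ᵥ x := by
    intro x y
    have hDt : Dᵀ = D := by
      have := hD.1
      simpa [Matrix.IsHermitian, Matrix.conjTranspose_eq_transpose_of_trivial] using this
    calc x ⬝ᵥ D *ᵥ y = (x ᵥ* D) ⬝ᵥ y := Matrix.dotProduct_mulVec x D y
      _ = (Dᵀ *ᵥ x) ⬝ᵥ y := by rw [Matrix.mulVec_transpose]
      _ = (D *ᵥ x) ⬝ᵥ y := by rw [hDt]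
      _ = y ⬝ᵥ D *ᵥ x := dotProduct_comm _ _
  have hexpand : ∀ x y : Fin n → ℝ,
      (x + y) ⬝ᵥ D *ᵥ (x + y) = x ⬝ᵥ D *ᵥ x + 2 * (x ⬝ᵥ D *ᵥ y) + y ⬝ᵥ D *ᵥ y := by
    intro x y
    rw [Matrix.mulVec_add, dotProduct_add, add_dotProduct,
      add_dotProduct, hsymm y x]
    ring
  have hsq : ∀ a b : ℝ, 0 ≤ a → 0 ≤ b → Real.sqrt a ≤ Real.sqrt b → a ≤ b := by
    intro a b ha hb h
    have := mul_self_le_mul_self (Real.sqrt_nonneg a) h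
    rwa [Real.mul_self_sqrt ha, Real.mul_self_sqrt hb] at this
  -- r0 is D-orthogonal to ker A
  have horth : ∀ u : Fin n → ℝ, A *ᵥ u = 0 → r0 ⬝ᵥ D *ᵥ u = 0 := by
    intro u hu
    set c := r0 ⬝ᵥ D *ᵥ u with hc
    set q := u ⬝ᵥ D *ᵥ u with hq
    have hqnn : 0 ≤ q := hQnn u
    have key : ∀ t : ℝ, 0 ≤ 2 * t * c + t ^ 2 * q := by
      intro t
      have hmem : A *ᵥ (r0 + t • u) = b := by
        rw [Matrix.mulVec_add, Matrix.mulVec_smul, hu, hr0A]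
        simp
      have := hsq _ _ (hQnn r0) (hQnn _) (hr0min _ hmem)
      have hexp : (r0 + t • u) ⬝ᵥ D *ᵥ (r0 + t • u)
          = r0 ⬝ᵥ D *ᵥ r0 + 2 * (t * c) + t ^ 2 * q := by
        rw [hexpand, hc, hq]
        simp only [Matrix.mulVec_smul, dotProduct_smul, smul_dotProduct,
          smul_eq_mul]
        ring
      rw [hexp] at this
      nlinarith
    have h1 := key (-c / (q + 1))
    have hq1 : (0:ℝ) < q + 1 := by linarith
    have h2 : 0 ≤ (2 * (-c / (q + 1)) * c + (-c / (q + 1)) ^ 2 * q) * (q + 1) ^ 2 :=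
      mul_nonneg h1 (by positivity)
    have h3 : (2 * (-c / (q + 1)) * c + (-c / (q + 1)) ^ 2 * q) * (q + 1) ^ 2
        = c ^ 2 * (q - 2 * (q + 1)) := by
      field_simp
      ring
    have hc2 : c ^ 2 ≤ 0 := by nlinarith
    have hc0 : c ^ 2 = 0 := le_antisymm hc2 (sq_nonneg c)
    exact pow_eq_zero_iff (two_ne_zero) |>.mp hc0
  -- the bilinear form and orthogonal decomposition
  set B : LinearMap.BilinForm ℝ (Fin n → ℝ) := Matrix.toBilin' D with hB
  have hBapply : ∀ x y : Fin n → ℝ, B x y = x ⬝ᵥ D *ᵥ y := by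
    intro x y
    rw [hB, Matrix.toBilin'_apply']
  have hrefl : B.IsRefl := by
    intro x y h
    rw [hBapply] at h ⊢
    rw [hsymm]; exact h
  set W : Submodule ℝ (Fin n → ℝ) := LinearMap.ker A.mulVecLin with hW
  have hWmem : ∀ x, x ∈ W ↔ A *ᵥ x = 0 := by
    intro x
    rw [hW, LinearMap.mem_ker, Matrix.mulVecLin_apply]
  have hnd : (B.restrict W).Nondegenerate := by
    refine (LinearMap.IsRefl.nondegenerate_iff_separatingLeft (B := B.restrict W) (fun x y h => hrefl x y h)).mpr ?_
    intro x hx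
    have h0 : B x x = 0 := by
      simpa using hx x
    rw [hBapply] at h0
    have : (x : Fin n → ℝ) = 0 := by
      by_contra hne
      have := hD.dotProduct_mulVec_pos hne
      simp only [star_trivial] at this
      rw [h0] at this
      exact lt_irrefl 0 this
    exact Subtype.ext this
  have hcompl := B.isCompl_orthogonal_of_restrict_nondegenerate hrefl hnd
  have hsup : W ⊔ B.orthogonal W = ⊤ := codisjoint_iff.mp hcompl.codisjoint
  obtain ⟨u, hu, v, hv, huv⟩ := Submodule.mem_sup.mp
    (by rw [hsup]; exact Submodule.mem_top : zbar - r0 ∈ W ⊔ B.orthogonal W)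
  have huW : A *ᵥ u = 0 := (hWmem u).mp hu
  have hvorth : ∀ p : Fin n → ℝ, A *ᵥ p = 0 → p ⬝ᵥ D *ᵥ v = 0 := by
    intro p hp
    have := hv p ((hWmem p).mpr hp)
    rwa [hBapply] at this
  -- z' := r0 + u is in Kbar
  have hz : zbar = (r0 + u) + v := by
    rw [add_assoc, huv]
    abel
  have hz' : r0 + u ∈ Kbar := by
    have h1 : α ⬝ᵥ D *ᵥ (r0 + u) = α ⬝ᵥ D *ᵥ zbar := by
      conv_rhs => rw [hz]
      simp only [Matrix.mulVec_add, dotProduct_add, hvorth α hα, add_zero]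
    have h2 : α' ⬝ᵥ D *ᵥ (r0 + u) = α' ⬝ᵥ D *ᵥ zbar := by
      conv_rhs => rw [hz]
      simp only [Matrix.mulVec_add, dotProduct_add, hvorth α' hα', add_zero]
    rw [hKbar] at hzbar ⊢
    exact ⟨h1 ▸ hzbar.1, h2 ▸ hzbar.2⟩
  -- minimality forces v = 0
  have hvz : v = 0 := by
    have hmin := hsq _ _ (hQnn _) (hQnn _) (hzbarmin _ hz')
    have e1 : (r0 + u) - r0 = u := by abel
    rw [e1] at hmin
    have e2 : zbar - r0 = u + v := huv.symm
    rw [e2, hexpand] at hmin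
    have huv0 : u ⬝ᵥ D *ᵥ v = 0 := hvorth u huW
    rw [huv0] at hmin
    have hvqe : v ⬝ᵥ D *ᵥ v ≤ 0 := by linarith
    by_contra hne
    have := hD.dotProduct_mulVec_pos hne
    simp only [star_trivial] at this
    linarith
  have hAz : A *ᵥ zbar = b := by
    have h : zbar = r0 + u := by
      rw [hz, hvz, add_zero]
    rw [h, Matrix.mulVec_add, hr0A, huW, add_zero]
  refine ⟨hAz, ?_, ⟨zbar, hAz, hzbar⟩⟩
  intro x hxA hxK
  have hxker : A *ᵥ (x - r0) = 0 := by
    rw [Matrix.mulVec_sub, hxA, hr0A, sub_self]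
  have hzker : A *ᵥ (zbar - r0) = 0 := by
    rw [Matrix.mulVec_sub, hAz, hr0A, sub_self]
  have hdist := hsq _ _ (hQnn _) (hQnn _) (hzbarmin x hxK)
  have key : ∀ y : Fin n → ℝ, A *ᵥ y = b →
      y ⬝ᵥ D *ᵥ y = r0 ⬝ᵥ D *ᵥ r0 + (y - r0) ⬝ᵥ D *ᵥ (y - r0) := by
    intro y hy
    have hyk : A *ᵥ (y - r0) = 0 := by rw [Matrix.mulVec_sub, hy, hr0A, sub_self]
    have : y = r0 + (y - r0) := by abel
    calc y ⬝ᵥ D *ᵥ y = (r0 + (y - r0)) ⬝ᵥ D *ᵥ (r0 + (y - r0)) := by rw [← this]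
      _ = r0 ⬝ᵥ D *ᵥ r0 + 2 * (r0 ⬝ᵥ D *ᵥ (y - r0)) + (y - r0) ⬝ᵥ D *ᵥ (y - r0) :=
        hexpand _ _
      _ = r0 ⬝ᵥ D *ᵥ r0 + (y - r0) ⬝ᵥ D *ᵥ (y - r0) := by
        rw [horth _ hyk]; ring
  have h1 := key zbar hAz
  have h2 := key x hxA
  apply Real.sqrt_le_sqrt
  rw [h1, h2]
  linarith
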